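/- Let N = nm with n, m coprime integers both ≥ 2, where m is odd and not divisible by 3. Then there exists an integer k with 1 ≤ k ≤ N-1, gcd(k,N) = 1, such that the k̄-monomial minimal solution modulo N is reducible, of size 6m if n > 2, and of size 3m if n = 2. -/

import Mathlib

def matE {N : ℕ} (a : ZMod N) : Matrix (Fin 2) (Fin 2) (ZMod N) := !![a, -1; 1, 0]

/-- `M_m(k,…,k) = ±Id` over `ℤ/Nℤ` (constant tuple, so a matrix power). -/
def isMonSol {N : ℕ} (k : ZMod N) (m : ℕ) : Prop :=
  matE k ^ m = 1 ∨ matE k ^ m = -1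

/-- `r` is the size of the `k`-monomial minimal solution modulo `N`. -/
def minMonSize {N : ℕ} (k : ZMod N) (r : ℕ) : Prop :=
  0 < r ∧ isMonSol k r ∧ ∀ m, 0 < m → isMonSol k m → r ≤ m

/-- `M_n(a₁,…,aₙ)` for a tuple given as a list. -/
def Mlist {N : ℕ} (l : List (ZMod N)) : Matrix (Fin 2) (Fin 2) (ZMod N) :=
  (l.map matE).reverse.prod

/-- A tuple is a solution of `(E_N)` if its matrix equals `±Id`. -/
def IsSolL {N : ℕ} (l : List (ZMod N)) : Prop := Mlist l = 1 ∨ Mlist l = -1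

/-- The sum `⊕` of two tuples. -/
def oplus {N : ℕ} (a b : List (ZMod N)) : List (ZMod N) :=
  (a.head?.getD 0 + b.getLast?.getD 0) ::
    (a.tail.dropLast ++ ((a.getLast?.getD 0 + b.head?.getD 0) :: b.tail.dropLast))

/-- Equivalence: cyclic permutation of the tuple or of its reversal. -/
def EquivL {N : ℕ} (a b : List (ZMod N)) : Prop :=
  (∃ i, b = a.rotate i) ∨ (∃ i, b = a.reverse.rotate i)

/-- A solution is reducible if it is equivalent to a sum `a ⊕ b` with `b` a
solution of `(E_N)` and both sizes at least 3. -/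
def Reducible {N : ℕ} (c : List (ZMod N)) : Prop :=
  ∃ a b : List (ZMod N), 3 ≤ a.length ∧ 3 ≤ b.length ∧ IsSolL b ∧ EquivL c (oplus a b)

/-! ### Auxiliary machinery -/

/-- continuant sequence: `pseq a 0 = 0`, `pseq a 1 = 1`,
`pseq a (t+2) = a * pseq a (t+1) - pseq a t`. -/
def pseq {N : ℕ} (a : ZMod N) : ℕ → ZMod N
  | 0 => 0
  | 1 => 1
  | (t+2) => a * pseq a (t+1) - pseq a t

lemma fin2_eq_iff {N : ℕ} (a b c d e f g h : ZMod N) :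
    !![a,b;c,d] = !![e,f;g,h] ↔ a=e∧b=f∧c=g∧d=h := by
  constructor
  · intro hh
    have h0 := congrFun (congrFun hh 0) 0
    have h1 := congrFun (congrFun hh 0) 1
    have h2 := congrFun (congrFun hh 1) 0
    have h3 := congrFun (congrFun hh 1) 1
    simp at h0 h1 h2 h3; exact ⟨h0,h1,h2,h3⟩
  · rintro ⟨rfl,rfl,rfl,rfl⟩; rfl

lemma negone_fin_two {N : ℕ} :
    (-1 : Matrix (Fin 2) (Fin 2) (ZMod N)) = !![-1,0;0,-1] := by
  rw [Matrix.one_fin_two]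
  ext i j
  fin_cases i <;> fin_cases j <;> simp

lemma matE_pow {N : ℕ} (a : ZMod N) (t : ℕ) :
    matE a ^ (t+1) = !![pseq a (t+2), -pseq a (t+1); pseq a (t+1), -pseq a t] := by
  induction t with
  | zero => simp [matE, pseq]
  | succ t ih =>
      rw [pow_succ, ih]
      rw [show matE a = !![a,-1;1,0] from rfl, Matrix.mul_fin_two]
      have h3 : pseq a (t+3) = a * pseq a (t+2) - pseq a (t+1) := rfl
      have h2 : pseq a (t+2) = a * pseq a (t+1) - pseq a t := rfl
      rw [fin2_eq_iff]
      refine ⟨by linear_combination -h3, by ring, by linear_combination -h2, by ring⟩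

lemma pseq_det {N : ℕ} (a : ZMod N) (t : ℕ) :
    pseq a (t+2) * pseq a t = pseq a (t+1) * pseq a (t+1) - 1 := by
  induction t with
  | zero => simp [pseq]
  | succ t ih =>
      have h3 : pseq a (t+3) = a * pseq a (t+2) - pseq a (t+1) := rfl
      have h2 : pseq a (t+2) = a * pseq a (t+1) - pseq a t := rfl
      rw [h3]; linear_combination (-pseq a (t+2)) * h2 + ih

lemma isMonSol_iff {N : ℕ} (a : ZMod N) (s : ℕ) :
    isMonSol a (s+1) ↔ pseq a (s+1) = 0 ∧ (pseq a s = 1 ∨ pseq a s = -1) := by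
  have h2 : pseq a (s+2) = a * pseq a (s+1) - pseq a s := rfl
  unfold isMonSol
  rw [matE_pow, negone_fin_two, Matrix.one_fin_two, fin2_eq_iff, fin2_eq_iff]
  constructor
  · rintro (⟨hA, hB, hC, hD⟩ | ⟨hA, hB, hC, hD⟩)
    · exact ⟨hC, Or.inr (by linear_combination -hD)⟩
    · exact ⟨hC, Or.inl (by linear_combination -hD)⟩
  · rintro ⟨h0, h1 | h1⟩
    · right
      refine ⟨by rw [h2, h0, h1]; ring, by rw [h0]; ring, h0, by rw [h1]⟩
    · left
      refine ⟨by rw [h2, h0, h1]; ring, by rw [h0]; ring, h0, by rw [h1]; ring⟩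

lemma pseq_map {N M : ℕ} (f : ZMod N →+* ZMod M) (a : ZMod N) (t : ℕ) :
    f (pseq a t) = pseq (f a) t := by
  induction t using Nat.twoStepInduction with
  | zero => simp [pseq]
  | one => simp [pseq]
  | more t ih1 ih2 =>
      show f (a * pseq a (t+1) - pseq a t) = (f a) * pseq (f a) (t+1) - pseq (f a) t
      rw [map_sub, map_mul, ih1, ih2]

/-- the 6-periodic sequence 0,1,1,0,-1,-1 -/
def qseq (n : ℕ) : ℕ → ZMod n := fun t =>
  if t % 6 = 0 then 0 else if t % 6 = 1 then 1 else if t % 6 = 2 then 1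
  else if t % 6 = 3 then 0 else if t % 6 = 4 then -1 else -1

lemma pseq_one_eq_qseq {n : ℕ} (t : ℕ) : pseq (1 : ZMod n) t = qseq n t := by
  induction t using Nat.twoStepInduction with
  | zero => simp [pseq, qseq]
  | one => simp [pseq, qseq]
  | more t ih1 ih2 =>
      show (1 : ZMod n) * pseq 1 (t+1) - pseq 1 t = qseq n (t+2)
      rw [one_mul, ih1, ih2]
      have e1 : (t+1) % 6 = (t % 6 + 1) % 6 := by omega
      have e2 : (t+2) % 6 = (t % 6 + 2) % 6 := by omega
      have h6 : t % 6 = 0 ∨ t % 6 = 1 ∨ t % 6 = 2 ∨ t % 6 = 3 ∨ t % 6 = 4 ∨ t % 6 = 5 := by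
        omega
      unfold qseq
      rcases h6 with h|h|h|h|h|h <;> rw [e1, e2, h] <;> norm_num

/-- the constant-2 continuant is `t`. -/
lemma pseq_two {n : ℕ} (t : ℕ) : pseq (2 : ZMod n) t = (t : ZMod n) := by
  induction t using Nat.twoStepInduction with
  | zero => simp [pseq]
  | one => simp [pseq]
  | more t ih1 ih2 =>
      show (2 : ZMod n) * pseq 2 (t+1) - pseq 2 t = ((t+2 : ℕ) : ZMod n)
      rw [ih1, ih2]; push_cast; ring

lemma crt_inj (n m : ℕ) [NeZero n] [NeZero m] (hco : Nat.Coprime n m)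
    (x y : ZMod (n*m))
    (h1 : ZMod.castHom (dvd_mul_right n m) (ZMod n) x
        = ZMod.castHom (dvd_mul_right n m) (ZMod n) y)
    (h2 : ZMod.castHom (dvd_mul_left m n) (ZMod m) x
        = ZMod.castHom (dvd_mul_left m n) (ZMod m) y) : x = y := by
  haveI : NeZero (n*m) := ⟨Nat.mul_ne_zero (NeZero.ne n) (NeZero.ne m)⟩
  have hz1 : ZMod.castHom (dvd_mul_right n m) (ZMod n) (x - y) = 0 := by
    rw [map_sub, h1, sub_self]
  have hz2 : ZMod.castHom (dvd_mul_left m n) (ZMod m) (x - y) = 0 := by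
    rw [map_sub, h2, sub_self]
  set z := x - y with hzdef
  have hv1 : ((z.val : ℕ) : ZMod n) = 0 := by
    rwa [ZMod.natCast_val, ← ZMod.castHom_apply (h := dvd_mul_right n m)]
  have hv2 : ((z.val : ℕ) : ZMod m) = 0 := by
    rwa [ZMod.natCast_val, ← ZMod.castHom_apply (h := dvd_mul_left m n)]
  have d1 : n ∣ z.val := (ZMod.natCast_eq_zero_iff _ _).mp hv1
  have d2 : m ∣ z.val := (ZMod.natCast_eq_zero_iff _ _).mp hv2
  have d : n * m ∣ z.val := Nat.Coprime.mul_dvd_of_dvd_of_dvd hco d1 d2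
  have hlt : z.val < n * m := ZMod.val_lt z
  have : z.val = 0 := by
    rcases Nat.eq_zero_or_pos z.val with h|h
    · exact h
    · exact absurd (Nat.le_of_dvd h d) (by omega)
  have hz0 : z = 0 := by rwa [ZMod.val_eq_zero] at this
  exact sub_eq_zero.mp (hzdef ▸ hz0)

lemma Mlist_sandwich {N : ℕ} (c d k : ZMod N) (t : ℕ) :
    Mlist (c :: (List.replicate t k ++ [d])) = matE d * (matE k ^ t) * matE c := by
  simp [Mlist, List.map_append, List.map_replicate, List.reverse_append,
    List.prod_append, List.prod_replicate, List.reverse_replicate, mul_assoc]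

lemma sandwich_eq {N : ℕ} (e f g : ZMod N) (he : e*e = 1) (hd : e*g = f*f - 1) :
    matE (e*f) * !![e,-f;f,-g] * matE (e*f) = !![-e,0;0,-e] := by
  rw [show matE (e*f) = !![e*f,-1;1,0] from rfl, Matrix.mul_fin_two, Matrix.mul_fin_two,
    fin2_eq_iff]
  exact ⟨by linear_combination (e*f^2 - g) * he + e * hd, by linear_combination (-f) * he,
    by linear_combination f * he, by ring⟩

lemma reducible_of {N : ℕ} (a : ZMod N) (r u' : ℕ) (h1 : 1 ≤ u') (h2 : u' + 3 ≤ r)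
    (he : pseq a (u'+1) = 1 ∨ pseq a (u'+1) = -1) :
    Reducible (List.replicate r a) := by
  obtain ⟨w, rfl⟩ : ∃ w, u' = w + 1 := ⟨u' - 1, by omega⟩
  have he' : pseq a (w+2) = 1 ∨ pseq a (w+2) = -1 := he
  have he2 : pseq a (w+2) * pseq a (w+2) = 1 := by
    rcases he' with h | h <;> rw [h] <;> ring
  set x : ZMod N := pseq a (w+2) * pseq a (w+1) with hx
  refine ⟨(a - x) :: (List.replicate (r - (w+1) - 2) a ++ [a - x]),
          x :: (List.replicate (w+1) a ++ [x]), ?_, ?_, ?_, ?_⟩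
  · simp only [List.length_cons, List.length_append, List.length_replicate,
      List.length_singleton]
    omega
  · simp only [List.length_cons, List.length_append, List.length_replicate,
      List.length_singleton]
    omega
  · -- IsSolL
    have hm : Mlist (x :: (List.replicate (w+1) a ++ [x]))
        = matE x * (matE a ^ (w+1)) * matE x := Mlist_sandwich x x a (w+1)
    rw [matE_pow, hx] at hm
    rw [sandwich_eq (pseq a (w+2)) (pseq a (w+1)) (pseq a w) he2 (pseq_det a w)] at hm
    rcases he' with h | h
    · right
      rw [hm, h, negone_fin_two]
    · left
      rw [hm, h, Matrix.one_fin_two, fin2_eq_iff]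
      norm_num
  · -- EquivL
    left
    refine ⟨0, ?_⟩
    rw [List.rotate_zero]
    rw [oplus]
    rw [show ((a - x) :: (List.replicate (r - (w+1) - 2) a ++ [a - x])
        : List (ZMod N)).head?.getD 0 = a - x from rfl]
    rw [show ((a - x) :: (List.replicate (r - (w+1) - 2) a ++ [a - x])
        : List (ZMod N)).tail = List.replicate (r - (w+1) - 2) a ++ [a - x] from rfl]
    rw [show (x :: (List.replicate (w+1) a ++ [x]) : List (ZMod N)).tail
        = List.replicate (w+1) a ++ [x] from rfl]
    have hga : ((a - x) :: (List.replicate (r - (w+1) - 2) a ++ [a - x])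
        : List (ZMod N)).getLast? = some (a - x) := by
      rw [show ((a - x) :: (List.replicate (r - (w+1) - 2) a ++ [a - x])
          : List (ZMod N)) = ((a - x) :: List.replicate (r - (w+1) - 2) a) ++ [a - x]
          from by simp]
      exact List.getLast?_concat
    have hgb : (x :: (List.replicate (w+1) a ++ [x]) : List (ZMod N)).getLast?
        = some x := by
      rw [show (x :: (List.replicate (w+1) a ++ [x]) : List (ZMod N))
          = (x :: List.replicate (w+1) a) ++ [x] from by simp]
      exact List.getLast?_concat
    rw [hga, hgb, List.dropLast_concat, List.dropLast_concat]
    simp only [Option.getD_some, List.head?_cons]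
    rw [show a - x + x = a from by ring]
    rw [show (a :: List.replicate (w+1) a : List (ZMod N))
        = List.replicate (w+2) a from rfl]
    rw [← List.replicate_add]
    rw [show r - (w+1) - 2 + (w+2) = r - 1 from by omega]
    rw [← List.replicate_succ]
    rw [show r - 1 + 1 = r from by omega]

theorem stmt17 (n m : ℕ) (hn : 2 ≤ n) (hm : 2 ≤ m) (hco : Nat.Coprime n m)
    (hmodd : Odd m) (hm3 : ¬ 3 ∣ m) :
    ∃ k : ℕ, 1 ≤ k ∧ k ≤ n * m - 1 ∧ Nat.Coprime k (n * m) ∧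
      minMonSize ((k : ZMod (n * m))) (if 2 < n then 6 * m else 3 * m) ∧
      Reducible (List.replicate (if 2 < n then 6 * m else 3 * m)
        ((k : ZMod (n * m)))) := by
  have hm2 : m % 2 = 1 := Nat.odd_iff.mp hmodd
  have hm3' : m % 3 ≠ 0 := fun h => hm3 (Nat.dvd_of_mod_eq_zero h)
  have hm6 : m % 6 = 1 ∨ m % 6 = 5 := by omega
  have hm'3 : 3 ≤ m := by omega
  haveI : NeZero n := ⟨by omega⟩
  haveI : NeZero m := ⟨by omega⟩
  haveI : NeZero (n*m) := ⟨Nat.mul_ne_zero (by omega) (by omega)⟩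
  haveI : Fact (1 < n) := ⟨hn⟩
  haveI : Fact (1 < m) := ⟨hm⟩
  have hNpos : 0 < n * m := by positivity
  obtain ⟨c, hc1, hc2⟩ := Nat.chineseRemainder hco 1 2
  set r := if 2 < n then 6 * m else 3 * m with hr
  have hr3m : 3 * m ≤ r := by rw [hr]; split_ifs <;> omega
  have hrpos : 0 < r := by omega
  set k := c % (n*m) with hk
  have e1 : k ≡ c [MOD n] := Nat.mod_mod_of_dvd c (dvd_mul_right n m)
  have e2 : k ≡ c [MOD m] := Nat.mod_mod_of_dvd c (dvd_mul_left m n)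
  have hkn : k ≡ 1 [MOD n] := e1.trans hc1
  have hkm : k ≡ 2 [MOD m] := e2.trans hc2
  have hknv : k % n = 1 := by
    have h1 : (1 : ℕ) % n = 1 := Nat.mod_eq_of_lt (by omega)
    have := hkn; unfold Nat.ModEq at this; omega
  have hkmv : k % m = 2 := by
    have h1 : (2 : ℕ) % m = 2 := Nat.mod_eq_of_lt (by omega)
    have := hkm; unfold Nat.ModEq at this; omega
  have hk1 : 1 ≤ k := by
    rcases Nat.eq_zero_or_pos k with h | h
    · rw [h, Nat.zero_mod] at hknv; omega
    · omega
  have hklt : k < n * m := Nat.mod_lt c hNpos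
  -- coprimality
  have hcop : Nat.Coprime k (n * m) := by
    have h1 : Nat.Coprime k n := by
      apply Nat.coprime_comm.mp
      unfold Nat.Coprime
      rw [Nat.gcd_rec, hknv]
      exact Nat.gcd_one_left n
    have h2 : Nat.Coprime k m := by
      apply Nat.coprime_comm.mp
      unfold Nat.Coprime
      rw [Nat.gcd_rec, hkmv]
      exact (Nat.prime_two.coprime_iff_not_dvd).mpr (by omega)
    exact Nat.Coprime.mul_right h1 h2
  -- the element of ZMod (n*m)
  set K : ZMod (n*m) := ((k : ℕ) : ZMod (n*m)) with hK
  set φn := ZMod.castHom (dvd_mul_right n m) (ZMod n) with hφn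
  set φm := ZMod.castHom (dvd_mul_left m n) (ZMod m) with hφm
  have hKn : φn K = 1 := by
    have : ((k:ℕ) : ZMod n) = ((1:ℕ) : ZMod n) := (ZMod.natCast_eq_natCast_iff _ _ _).mpr hkn
    rw [hK, hφn, map_natCast, this, Nat.cast_one]
  have hKm : φm K = 2 := by
    have : ((k:ℕ) : ZMod m) = ((2:ℕ) : ZMod m) := (ZMod.natCast_eq_natCast_iff _ _ _).mpr hkm
    rw [hK, hφm, map_natCast, this, Nat.cast_two]
  have hpm : ∀ t, φm (pseq K t) = (t : ZMod m) := fun t => by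
    rw [pseq_map, hKm, pseq_two]
  have hpn : ∀ t, φn (pseq K t) = qseq n t := fun t => by
    rw [pseq_map, hKn, pseq_one_eq_qseq]
  have eqK : ∀ x y : ZMod (n*m), φn x = φn y → φm x = φm y → x = y :=
    fun x y h1 h2 => crt_inj n m hco x y h1 h2
  -- characterization of vanishing
  have key0 : ∀ t : ℕ, pseq K t = 0 ↔ (m ∣ t ∧ (t % 6 = 0 ∨ t % 6 = 3)) := by
    intro t
    constructor
    · intro h
      refine ⟨?_, ?_⟩
      · exact (ZMod.natCast_eq_zero_iff t m).mp (by rw [← hpm t, h, map_zero])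
      · have hq : qseq n t = 0 := by rw [← hpn t, h, map_zero]
        have h6 : t%6 = 0 ∨ t%6 = 1 ∨ t%6 = 2 ∨ t%6 = 3 ∨ t%6 = 4 ∨ t%6 = 5 := by omega
        rcases h6 with h'|h'|h'|h'|h'|h' <;> simp [qseq, h'] at hq ⊢
    · rintro ⟨hd, h6⟩
      apply eqK
      · rw [hpn t, map_zero]; rcases h6 with h|h <;> simp [qseq, h]
      · rw [hpm t, map_zero]
        exact (ZMod.natCast_eq_zero_iff t m).mpr hd
  -- minimality
  have hmin : ∀ t, 0 < t → isMonSol K t → r ∣ t := by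
    intro t ht hsol
    obtain ⟨s, rfl⟩ : ∃ s, t = s + 1 := ⟨t-1, by omega⟩
    rw [isMonSol_iff] at hsol
    obtain ⟨h0, h1⟩ := hsol
    obtain ⟨hdm, h6⟩ := (key0 _).mp h0
    have hsm : ((s:ℕ) : ZMod m) = -1 := by
      have h' : ((s+1 : ℕ) : ZMod m) = 0 := (ZMod.natCast_eq_zero_iff _ m).mpr hdm
      push_cast at h'
      exact eq_neg_of_add_eq_zero_left h'
    have hps : pseq K s = -1 := by
      rcases h1 with h|h
      · exfalso
        have h' := congrArg φm h
        rw [hpm, map_one, hsm] at h'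
        have h2' : ((2:ℕ) : ZMod m) = 0 := by push_cast; linear_combination -h'
        have := (ZMod.natCast_eq_zero_iff 2 m).mp h2'
        have := Nat.le_of_dvd (by omega) this
        omega
      · exact h
    have hqs : qseq n s = -1 := by rw [← hpn s, hps, map_neg, map_one]
    by_cases h2n : 2 < n
    · have hs6 : s % 6 = 4 ∨ s % 6 = 5 := by
        have hx : s%6 = 0 ∨ s%6 = 1 ∨ s%6 = 2 ∨ s%6 = 3 ∨ s%6 = 4 ∨ s%6 = 5 := by omega
        rcases hx with h'|h'|h'|h'|h'|h' <;> simp [qseq, h'] at hqs ⊢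
        all_goals {
          exfalso
          have h2' : ((2:ℕ) : ZMod n) = 0 := by push_cast; linear_combination hqs
          have := (ZMod.natCast_eq_zero_iff 2 n).mp h2'
          have := Nat.le_of_dvd (by omega) this
          omega }
      have h61 : 6 ∣ (s+1) := by omega
      have hco2 : Nat.Coprime 2 m := (Nat.prime_two.coprime_iff_not_dvd).mpr (by omega)
      have hco3 : Nat.Coprime 3 m := (Nat.prime_three.coprime_iff_not_dvd).mpr hm3
      have hco6 : Nat.Coprime 6 m := by
        have := Nat.Coprime.mul hco2 hco3
        norm_num at this
        exact this
      have := Nat.Coprime.mul_dvd_of_dvd_of_dvd hco6 h61 hdm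
      rw [hr, if_pos h2n]
      exact this
    · have h31 : 3 ∣ (s+1) := by omega
      have hco3 : Nat.Coprime 3 m := (Nat.prime_three.coprime_iff_not_dvd).mpr hm3
      have := Nat.Coprime.mul_dvd_of_dvd_of_dvd hco3 h31 hdm
      rw [hr, if_neg h2n]
      exact this
  -- existence
  have hex : isMonSol K r := by
    obtain ⟨s, hs⟩ : ∃ s, r = s + 1 := ⟨r-1, by omega⟩
    have hmr : m ∣ r := by
      rw [hr]; split_ifs
      · exact dvd_mul_left m 6
      · exact dvd_mul_left m 3
    rw [hs, isMonSol_iff]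
    constructor
    · apply (key0 _).mpr
      rw [← hs]
      refine ⟨hmr, ?_⟩
      by_cases h2n : 2 < n
      · rw [hr, if_pos h2n]; left; exact Nat.mul_mod_right 6 m
      · rw [hr, if_neg h2n]; right; omega
    · right
      apply eqK
      · rw [hpn, map_neg, map_one]
        by_cases h2n : 2 < n
        · have hs6 : s % 6 = 5 := by rw [hr, if_pos h2n] at hs; omega
          simp [qseq, hs6]
        · have hn2 : n = 2 := by omega
          have hs6 : s % 6 = 2 := by rw [hr, if_neg h2n] at hs; omega
          subst hn2
          simp only [qseq, hs6]
          decide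
      · rw [hpm, map_neg, map_one]
        have h' : ((s+1:ℕ) : ZMod m) = 0 := by
          rw [← hs]; exact (ZMod.natCast_eq_zero_iff _ m).mpr hmr
        push_cast at h'
        exact eq_neg_of_add_eq_zero_left h'
  refine ⟨k, hk1, by omega, hcop, ⟨hrpos, hex, fun t ht hs => Nat.le_of_dvd ht (hmin t ht hs)⟩, ?_⟩
  -- reducibility
  rcases hm6 with h61 | h65
  · apply reducible_of K r m (by omega) (by omega)
    left
    apply eqK
    · rw [hpn, map_one]
      have : (m+1) % 6 = 2 := by omega
      simp [qseq, this]
    · rw [hpm, map_one]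
      push_cast
      rw [ZMod.natCast_self]
      ring
  · have hm5 : 5 ≤ m := by omega
    apply reducible_of K r (m-2) (by omega) (by omega)
    right
    rw [show m - 2 + 1 = m - 1 from by omega]
    apply eqK
    · rw [hpn, map_neg, map_one]
      have : (m-1) % 6 = 4 := by omega
      simp [qseq, this]
    · rw [hpm, map_neg, map_one]
      have h' : ((m-1+1 : ℕ) : ZMod m) = 0 := by
        rw [show m-1+1 = m from by omega]; exact ZMod.natCast_self m
      push_cast at h'
      exact eq_neg_of_add_eq_zero_left h'
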